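/- For n ≥ 3, let U_n = Σ_t m_{n,t}·2^{n−2t} and V_n = Σ_t m_{n,t}·4^{n−2t}, where m_{n,t} is the number of size-t matchings in the cycle C_n. Then U_n² − V_n ≥ 4·U_n. -/
import Mathlib


/-- A finite set of edges forms a matching if its edges are pairwise disjoint. -/
def IsMatchingSet {n : ℕ} (M : Finset (Sym2 (Fin n))) : Prop :=
  ∀ e ∈ M, ∀ f ∈ M, e ≠ f → ∀ x : Fin n, ¬(x ∈ e ∧ x ∈ f)

/-- The number of matchings of size `t` in the cycle graph `C_n`. -/
noncomputable def matchingCount (n t : ℕ) : ℕ :=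
  letI : DecidablePred fun M : Finset (Sym2 (Fin n)) => IsMatchingSet M :=
    fun _ => Classical.dec _
  (((SimpleGraph.cycleGraph n).edgeFinset.powersetCard t).filter
    (fun M => IsMatchingSet M)).card

/-- `U_n = Σ_t m_{n,t} 2^{n-2t}`. -/
noncomputable def U (n : ℕ) : ℤ :=
  ∑ t ∈ Finset.range (n / 2 + 1), (matchingCount n t : ℤ) * 2 ^ (n - 2 * t)

/-- `V_n = Σ_t m_{n,t} 4^{n-2t}`. -/
noncomputable def V (n : ℕ) : ℤ :=
  ∑ t ∈ Finset.range (n / 2 + 1), (matchingCount n t : ℤ) * 4 ^ (n - 2 * t)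

lemma matchingCount_zero (n : ℕ) : matchingCount n 0 = 1 := by
  classical
  unfold matchingCount
  rw [Finset.powersetCard_zero]
  rw [Finset.filter_singleton]
  rw [if_pos]
  · simp
  · intro e he; simp at he

lemma two_le_matchingCount_one (n : ℕ) (hn : 3 ≤ n) : 2 ≤ matchingCount n 1 := by
  classical
  unfold matchingCount
  have h0 : (0 : ℕ) < n := by omega
  have h1 : (1 : ℕ) < n := by omega
  have h2 : (2 : ℕ) < n := by omega
  set G := SimpleGraph.cycleGraph n
  have hadj : ∀ (u v : Fin n), (v - u).val = 1 → G.Adj u v := by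
    intro u v h
    rw [SimpleGraph.cycleGraph_adj']
    exact Or.inr h
  have hA : G.Adj ⟨0, h0⟩ ⟨1, h1⟩ := by
    apply hadj
    show (n - 0 + 1) % n = 1
    rw [Nat.sub_zero, Nat.add_mod_left, Nat.mod_eq_of_lt (by omega)]
  have hB : G.Adj ⟨1, h1⟩ ⟨2, h2⟩ := by
    apply hadj
    show (n - 1 + 2) % n = 1
    have h : n - 1 + 2 = n + 1 := by omega
    rw [h, Nat.add_mod_left, Nat.mod_eq_of_lt (by omega)]
  have hmem : ∀ (u v : Fin n), G.Adj u v →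
      ({s(u, v)} : Finset (Sym2 (Fin n))) ∈
        (G.edgeFinset.powersetCard 1).filter (fun M => IsMatchingSet M) := by
    intro u v h
    rw [Finset.mem_filter, Finset.mem_powersetCard]
    refine ⟨⟨?_, by simp⟩, ?_⟩
    · intro e he
      simp at he
      subst he
      rw [SimpleGraph.mem_edgeFinset]
      exact h
    · intro e he f hf hef
      simp at he hf
      exact absurd (he.trans hf.symm) hef
  have hsub : ({({s(⟨0, h0⟩, ⟨1, h1⟩)} : Finset (Sym2 (Fin n))),
      ({s(⟨1, h1⟩, ⟨2, h2⟩)} : Finset (Sym2 (Fin n)))} : Finset (Finset (Sym2 (Fin n)))) ⊆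
      (G.edgeFinset.powersetCard 1).filter (fun M => IsMatchingSet M) := by
    intro M hM
    simp only [Finset.mem_insert, Finset.mem_singleton] at hM
    rcases hM with rfl | rfl
    · exact hmem _ _ hA
    · exact hmem _ _ hB
  have hne : ({s(⟨0, h0⟩, ⟨1, h1⟩)} : Finset (Sym2 (Fin n))) ≠
      ({s(⟨1, h1⟩, ⟨2, h2⟩)} : Finset (Sym2 (Fin n))) := by
    simp only [ne_eq, Finset.singleton_inj, Sym2.eq_iff, Fin.mk.injEq]
    omega
  calc 2 = ({({s(⟨0, h0⟩, ⟨1, h1⟩)} : Finset (Sym2 (Fin n))),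
        ({s(⟨1, h1⟩, ⟨2, h2⟩)} : Finset (Sym2 (Fin n)))} :
        Finset (Finset (Sym2 (Fin n)))).card := by
        rw [Finset.card_insert_of_notMem (by simpa using hne), Finset.card_singleton]
    _ ≤ _ := Finset.card_le_card hsub

/-- For `n ≥ 3`, `U_n² − V_n ≥ 4 U_n`. -/
theorem U_sq_sub_V_ge (n : ℕ) (hn : 3 ≤ n) : U n ^ 2 - V n ≥ 4 * U n := by
  classical
  set s := Finset.range (n / 2 + 1) with hs
  set a : ℕ → ℤ := fun t => (matchingCount n t : ℤ) * 2 ^ (n - 2 * t) with ha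
  have ha_nonneg : ∀ t, 0 ≤ a t := fun t => by positivity
  have h0s : (0 : ℕ) ∈ s := by simp [hs]
  have h1s : (1 : ℕ) ∈ s.erase 0 := by
    simp [hs]
    omega
  have hU : U n = a 0 + ∑ t ∈ s.erase 0, a t := by
    rw [U, ← Finset.add_sum_erase _ a h0s]
  set T : ℤ := ∑ t ∈ s.erase 0, a t with hT
  have hT_nonneg : 0 ≤ T := Finset.sum_nonneg fun t _ => ha_nonneg t
  have hTa1 : a 1 ≤ T := Finset.single_le_sum (fun t _ => ha_nonneg t) h1s
  -- a 0 = 2^n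
  have ha0 : a 0 = 2 ^ n := by simp [ha, matchingCount_zero]
  -- a 1 ≥ 2 * 2^(n-2)
  have ha1 : 2 * 2 ^ (n - 2) ≤ a 1 := by
    have hm : (2 : ℤ) ≤ (matchingCount n 1 : ℤ) := by
      exact_mod_cast two_le_matchingCount_one n hn
    have : (n - 2 * 1) = n - 2 := by omega
    rw [ha]
    simp only [this]
    have h2 : (0:ℤ) < 2 ^ (n - 2) := by positivity
    nlinarith
  -- V ≤ ∑ (a t)^2
  have hV : V n ≤ ∑ t ∈ s, (a t) ^ 2 := by
    rw [V]
    apply Finset.sum_le_sum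
    intro t _
    have hm : (0 : ℤ) ≤ (matchingCount n t : ℤ) := by positivity
    have hmm : (matchingCount n t : ℤ) ≤ (matchingCount n t : ℤ) ^ 2 := by
      nlinarith [Int.le_of_lt (show (0:ℤ) < 1 by norm_num)]
    have h4 : (4 : ℤ) ^ (n - 2 * t) = (2 ^ (n - 2 * t)) ^ 2 := by
      rw [show (4 : ℤ) = 2 ^ 2 by norm_num, ← pow_mul, ← pow_mul, Nat.mul_comm]
    rw [ha]
    have hp : (0:ℤ) ≤ (2:ℤ) ^ (n - 2*t) := by positivity
    calc (matchingCount n t : ℤ) * 4 ^ (n - 2 * t)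
        = (matchingCount n t : ℤ) * (2 ^ (n - 2 * t)) ^ 2 := by rw [h4]
      _ ≤ (matchingCount n t : ℤ) ^ 2 * (2 ^ (n - 2 * t)) ^ 2 := by
          apply mul_le_mul_of_nonneg_right hmm (by positivity)
      _ = ((matchingCount n t : ℤ) * 2 ^ (n - 2 * t)) ^ 2 := by ring
  -- ∑ (a t)^2 ≤ a0^2 + T^2
  have hsq : ∑ t ∈ s, (a t) ^ 2 ≤ (a 0) ^ 2 + T ^ 2 := by
    rw [← Finset.add_sum_erase _ (fun t => (a t) ^ 2) h0s]
    gcongr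
    exact Finset.sum_sq_le_sq_sum_of_nonneg (fun t _ => ha_nonneg t)
  -- put it together
  have key : U n ^ 2 - V n ≥ 2 * a 0 * T := by
    have : U n ^ 2 = (a 0) ^ 2 + 2 * a 0 * T + T ^ 2 := by rw [hU]; ring
    have h2 := hV.trans hsq
    linarith
  -- arithmetic finish
  have hpow : (2 : ℤ) ^ n = 4 * 2 ^ (n - 2) := by
    have h : (2 : ℤ) ^ ((n - 2) + 2) = 2 ^ (n - 2) * 2 ^ 2 := pow_add 2 _ _
    rw [show (n - 2) + 2 = n by omega] at h
    rw [h]; ring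
  set Q : ℤ := 2 ^ (n - 2) with hQ
  have hQ2 : (2 : ℤ) ≤ Q := by
    rw [hQ]
    calc (2:ℤ) = 2 ^ 1 := by norm_num
      _ ≤ 2 ^ (n - 2) := pow_le_pow_right₀ (by norm_num) (by omega)
  have hTQ : 2 * Q ≤ T := le_trans ha1 hTa1
  rw [ge_iff_le] at key ⊢
  rw [hU, ha0, hpow]
  rw [ha0, hpow] at key
  nlinarith [key, hQ2, hTQ]
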